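/- For every integer k ≥ 2, ∫₀^{2πk} cos θ · sin(θ/k) · (∫₀^θ cos τ · cos(τ/k) dτ) dθ = −π k² / (2(k² − 1)). Equivalently, (1/(2πk)) times this iterated integral equals −1/(kα) with α = 4(1 − k⁻²). -/

import Mathlib

private lemma hdsin (a τ : ℝ) : HasDerivAt (fun x => Real.sin (a*x)) (Real.cos (a*τ)*a) τ := by
  simpa using ((hasDerivAt_id τ).const_mul a).sin


/-- Averaging coefficient ν₁₃: for every integer k ≥ 2,
∫₀^{2πk} cos θ · sin(θ/k) · (∫₀^θ cos τ · cos(τ/k) dτ) dθ = −πk²/(2(k²−1));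
equivalently, (1/(2πk)) times this iterated integral equals −1/(kα) with α = 4(1 − k⁻²). -/
theorem stmt7 (k : ℕ) (hk : 2 ≤ k) :
    (∫ θ in (0:ℝ)..(2 * Real.pi * k),
        Real.cos θ * Real.sin (θ / k) * ∫ τ in (0:ℝ)..θ, Real.cos τ * Real.cos (τ / k))
      = -(Real.pi * (k : ℝ) ^ 2 / (2 * ((k : ℝ) ^ 2 - 1))) ∧
    (1 / (2 * Real.pi * k)) *
      (∫ θ in (0:ℝ)..(2 * Real.pi * k),
        Real.cos θ * Real.sin (θ / k) * ∫ τ in (0:ℝ)..θ, Real.cos τ * Real.cos (τ / k))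
      = -(1 / ((k : ℝ) * (4 * (1 - ((k : ℝ) ^ 2)⁻¹)))) := by
  have hc : (2:ℝ) ≤ (k:ℝ) := by exact_mod_cast hk
  obtain ⟨c, hcdef⟩ : ∃ c : ℝ, (k:ℝ) = c := ⟨_, rfl⟩
  rw [hcdef] at hc ⊢
  have hc0 : c ≠ 0 := by linarith
  have hcc : c * c⁻¹ = 1 := mul_inv_cancel₀ hc0
  set a : ℝ := 1 + 1/c with hadef
  set b : ℝ := 1 - 1/c with hbdef
  have hinv : 1/c ≤ 1/2 := by
    rw [div_le_div_iff₀ (by linarith) (by norm_num)]; linarith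
  have hinv0 : 0 < 1/c := by positivity
  have ha : a ≠ 0 := by simp only [hadef]; nlinarith
  have hb : b ≠ 0 := by simp only [hbdef]; nlinarith
  -- inner integral
  have hF : ∀ θ : ℝ, (∫ τ in (0:ℝ)..θ, Real.cos τ * Real.cos (τ/c))
      = (Real.sin (a*θ)/a + Real.sin (b*θ)/b)/2 := by
    intro θ
    have hder : ∀ τ : ℝ, HasDerivAt (fun x => (Real.sin (a*x)/a + Real.sin (b*x)/b)/2)
        (Real.cos τ * Real.cos (τ/c)) τ := by
      intro τ
      have h := (((hdsin a τ).div_const a).add ((hdsin b τ).div_const b)).div_const 2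
      convert h using 1
      · rfl
      · rfl
      · rfl
      have haτ : a*τ = τ + τ/c := by field_simp; linear_combination τ * hcc
      have hbτ : b*τ = τ - τ/c := by field_simp; linear_combination -τ * hcc
      rw [haτ, hbτ, Real.cos_add, Real.cos_sub]
      field_simp
      ring
    rw [intervalIntegral.integral_eq_sub_of_hasDerivAt (fun τ _ => hder τ)
      ((Real.continuous_cos.mul (Real.continuous_cos.comp (continuous_id.div_const c))).intervalIntegrable _ _)]
    simp
  -- antiderivative for the outer integral
  set G : ℝ → ℝ := fun θ =>
    ((θ/2 - Real.sin (2*a*θ)/(4*a))/a - (θ/2 - Real.sin (2*b*θ)/(4*b))/b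
      + (1/b - 1/a) * (Real.sin (2*(1/c)*θ)/(2*(1/c)) - Real.sin (2*θ)/2) / 2)/4 with hGdef
  have hGder : ∀ θ : ℝ, HasDerivAt G
      (Real.cos θ * Real.sin (θ/c) * ((Real.sin (a*θ)/a + Real.sin (b*θ)/b)/2)) θ := by
    intro θ
    have h1 : HasDerivAt (fun x:ℝ => x/2 - Real.sin (2*a*x)/(4*a))
        ((1:ℝ)/2 - Real.cos (2*a*θ)*(2*a)/(4*a)) θ :=
      ((hasDerivAt_id θ).div_const 2).sub ((hdsin (2*a) θ).div_const (4*a))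
    have h2 : HasDerivAt (fun x:ℝ => x/2 - Real.sin (2*b*x)/(4*b))
        ((1:ℝ)/2 - Real.cos (2*b*θ)*(2*b)/(4*b)) θ :=
      ((hasDerivAt_id θ).div_const 2).sub ((hdsin (2*b) θ).div_const (4*b))
    have h3 : HasDerivAt (fun x:ℝ => Real.sin (2*(1/c)*x)/(2*(1/c)) - Real.sin (2*x)/2)
        (Real.cos (2*(1/c)*θ)*(2*(1/c))/(2*(1/c)) - Real.cos (2*θ)*2/2) θ :=
      ((hdsin (2*(1/c)) θ).div_const (2*(1/c))).sub ((hdsin 2 θ).div_const 2)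
    have h := (((h1.div_const a).sub (h2.div_const b)).add
      (((h3.const_mul (1/b - 1/a)).div_const 2))).div_const 4
    convert h using 1
    · rfl
    · rfl
    · rfl
    -- trig identity
    have e1 : Real.cos (2*a*θ) = 1 - 2 * Real.sin (a*θ)^2 := by
      have : 2*a*θ = 2*(a*θ) := by ring
      rw [this, Real.cos_two_mul, Real.cos_sq']; ring
    have e2 : Real.cos (2*b*θ) = 1 - 2 * Real.sin (b*θ)^2 := by
      have : 2*b*θ = 2*(b*θ) := by ring
      rw [this, Real.cos_two_mul, Real.cos_sq']; ring
    have e3 : Real.cos (2*(1/c)*θ) - Real.cos (2*θ)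
        = 2 * Real.sin (a*θ) * Real.sin (b*θ) := by
      have ea : 2*θ = a*θ + b*θ := by simp only [hadef, hbdef]; ring
      have eb : 2*(1/c)*θ = a*θ - b*θ := by simp only [hadef, hbdef]; ring
      rw [ea, eb, Real.cos_add, Real.cos_sub]; ring
    have e4 : Real.cos θ * Real.sin (θ/c)
        = (Real.sin (a*θ) - Real.sin (b*θ))/2 := by
      have haτ : a*θ = θ + θ/c := by field_simp; linear_combination θ * hcc
      have hbτ : b*θ = θ - θ/c := by field_simp; linear_combination -θ * hcc
      rw [haτ, hbτ, Real.sin_add, Real.sin_sub]; ring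
    have e3' : Real.cos (2*(1/c)*θ) = Real.cos (2*θ) + 2*Real.sin (a*θ)*Real.sin (b*θ) := by
      linarith [e3]
    rw [e4, e1, e2, e3']
    field_simp
    ring
  -- evaluate the outer integral
  have hcont : Continuous (fun θ:ℝ => Real.cos θ * Real.sin (θ/c) * ((Real.sin (a*θ)/a + Real.sin (b*θ)/b)/2)) := by
    fun_prop
  have key : (∫ θ in (0:ℝ)..(2*Real.pi*c),
      Real.cos θ * Real.sin (θ/c) * ((Real.sin (a*θ)/a + Real.sin (b*θ)/b)/2))
      = G (2*Real.pi*c) - G 0 :=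
    intervalIntegral.integral_eq_sub_of_hasDerivAt (fun θ _ => hGder θ)
      (hcont.intervalIntegrable _ _)
  have hG0 : G 0 = 0 := by simp [hGdef]
  have s1 : Real.sin (2*a*(2*Real.pi*c)) = 0 := by
    have : 2*a*(2*Real.pi*c) = ((4*(k:ℤ)+4 : ℤ):ℝ) * Real.pi := by
      push_cast; rw [hcdef]; simp only [hadef]; field_simp; ring
    rw [this, Real.sin_int_mul_pi]
  have s2 : Real.sin (2*b*(2*Real.pi*c)) = 0 := by
    have : 2*b*(2*Real.pi*c) = ((4*(k:ℤ)-4 : ℤ):ℝ) * Real.pi := by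
      push_cast; rw [hcdef]; simp only [hbdef]; field_simp; ring
    rw [this, Real.sin_int_mul_pi]
  have s3 : Real.sin (2*(1/c)*(2*Real.pi*c)) = 0 := by
    have : 2*(1/c)*(2*Real.pi*c) = ((4 : ℤ):ℝ) * Real.pi := by
      push_cast; field_simp; ring
    rw [this, Real.sin_int_mul_pi]
  have s4 : Real.sin (2*(2*Real.pi*c)) = 0 := by
    have : 2*(2*Real.pi*c) = ((4*(k:ℤ) : ℤ):ℝ) * Real.pi := by
      push_cast; rw [hcdef]; ring
    rw [this, Real.sin_int_mul_pi]
  have hc1 : c^2 - 1 ≠ 0 := by nlinarith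
  have hcm1 : c - 1 ≠ 0 := by nlinarith
  have hcp1 : c + 1 ≠ 0 := by nlinarith
  have hGL : G (2*Real.pi*c) = -(Real.pi * c^2 / (2*(c^2-1))) := by
    simp only [hGdef, s1, s2, s3, s4]
    simp only [hadef, hbdef]
    field_simp
    ring
  have hmain : (∫ θ in (0:ℝ)..(2 * Real.pi * c),
        Real.cos θ * Real.sin (θ / c) * ∫ τ in (0:ℝ)..θ, Real.cos τ * Real.cos (τ / c))
      = -(Real.pi * c ^ 2 / (2 * (c ^ 2 - 1))) := by
    calc (∫ θ in (0:ℝ)..(2 * Real.pi * c),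
        Real.cos θ * Real.sin (θ / c) * ∫ τ in (0:ℝ)..θ, Real.cos τ * Real.cos (τ / c))
        = ∫ θ in (0:ℝ)..(2*Real.pi*c),
            Real.cos θ * Real.sin (θ/c) * ((Real.sin (a*θ)/a + Real.sin (b*θ)/b)/2) := by
          simp only [hF]
      _ = G (2*Real.pi*c) - G 0 := key
      _ = -(Real.pi * c^2 / (2*(c^2-1))) := by rw [hG0, hGL]; ring
  refine ⟨hmain, ?_⟩
  rw [hmain]
  have hπ : Real.pi ≠ 0 := Real.pi_ne_zero
  field_simp
  ring
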